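/- Let Π = Π_λ(Q_∞) with λ = (−n, 1), n ≠ 0. The algebra map π : C⟨x,y⟩ → e_0 Π e_0 sending 1 ↦ e_0, x ↦ X, y ↦ Y is surjective, and its kernel contains the element ([x,y] − 1)([x,y] + n − 1). -/

import Mathlib

open scoped ComplexOrder

/-- Generators of the deformed preprojective algebra `Π_λ(Q_∞)` of the quiver with two
vertices `{∞, 0}`, arrows `v : 0 → ∞`, `X : 0 → 0` and their reverses `w = v*`, `Y = X*`. -/
inductive PiGen : Type
  | X | Y | v | w | e0 | einf
  deriving DecidableEq

/-- Generators as elements of the free algebra. -/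
noncomputable def pg (a : PiGen) : FreeAlgebra ℂ PiGen := FreeAlgebra.ι ℂ a

/-- The defining relations of `Π_λ`, `λ = (λ_∞, λ_0)`: the path algebra relations for the
double quiver (orthogonal idempotents `e_0, e_∞` summing to `1`, `X = e_0 X e_0`,
`Y = e_0 Y e_0`, `v = e_∞ v e_0`, `w = e_0 w e_∞`) together with
`[X,Y] - wv = λ_0 e_0` and `vw = λ_∞ e_∞`. -/
inductive PiRel (lam0 laminf : ℂ) : FreeAlgebra ℂ PiGen → FreeAlgebra ℂ PiGen → Prop
  | idem_e0 : PiRel lam0 laminf (pg .e0 * pg .e0) (pg .e0)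
  | idem_einf : PiRel lam0 laminf (pg .einf * pg .einf) (pg .einf)
  | orth₁ : PiRel lam0 laminf (pg .e0 * pg .einf) 0
  | orth₂ : PiRel lam0 laminf (pg .einf * pg .e0) 0
  | sum_one : PiRel lam0 laminf (pg .e0 + pg .einf) 1
  | X_path : PiRel lam0 laminf (pg .e0 * pg .X * pg .e0) (pg .X)
  | Y_path : PiRel lam0 laminf (pg .e0 * pg .Y * pg .e0) (pg .Y)
  | v_path : PiRel lam0 laminf (pg .einf * pg .v * pg .e0) (pg .v)
  | w_path : PiRel lam0 laminf (pg .e0 * pg .w * pg .einf) (pg .w)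
  | main : PiRel lam0 laminf (pg .X * pg .Y - pg .Y * pg .X - pg .w * pg .v) (lam0 • pg .e0)
  | vw : PiRel lam0 laminf (pg .v * pg .w) (laminf • pg .einf)

/-- The deformed preprojective algebra `Π_λ(Q_∞)` with weight `λ = (λ_∞, λ_0)`. -/
noncomputable abbrev PiAlg (lam0 laminf : ℂ) := RingQuot (PiRel lam0 laminf)

noncomputable def PX (lam0 laminf : ℂ) : PiAlg lam0 laminf :=
  RingQuot.mkAlgHom ℂ (PiRel lam0 laminf) (pg .X)
noncomputable def PY (lam0 laminf : ℂ) : PiAlg lam0 laminf :=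
  RingQuot.mkAlgHom ℂ (PiRel lam0 laminf) (pg .Y)
noncomputable def Pv (lam0 laminf : ℂ) : PiAlg lam0 laminf :=
  RingQuot.mkAlgHom ℂ (PiRel lam0 laminf) (pg .v)
noncomputable def Pw (lam0 laminf : ℂ) : PiAlg lam0 laminf :=
  RingQuot.mkAlgHom ℂ (PiRel lam0 laminf) (pg .w)
noncomputable def Pe0 (lam0 laminf : ℂ) : PiAlg lam0 laminf :=
  RingQuot.mkAlgHom ℂ (PiRel lam0 laminf) (pg .e0)
noncomputable def Peinf (lam0 laminf : ℂ) : PiAlg lam0 laminf :=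
  RingQuot.mkAlgHom ℂ (PiRel lam0 laminf) (pg .einf)

/-- Generators `x, y` of the free algebra `ℂ⟨x,y⟩`. -/
inductive WGen : Type
  | x | y
  deriving DecidableEq

noncomputable def wx : FreeAlgebra ℂ WGen := FreeAlgebra.ι ℂ WGen.x
noncomputable def wy : FreeAlgebra ℂ WGen := FreeAlgebra.ι ℂ WGen.y

/-- The evaluation `ℂ⟨x,y⟩ → Π`, `x ↦ X`, `y ↦ Y`. -/
noncomputable def wLift (n : ℂ) : FreeAlgebra ℂ WGen →ₐ[ℂ] PiAlg 1 (-n) :=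
  FreeAlgebra.lift ℂ (fun g => match g with
    | WGen.x => PX 1 (-n)
    | WGen.y => PY 1 (-n))

/-- The algebra map `π : ℂ⟨x,y⟩ → e_0 Π e_0`, `1 ↦ e_0`, `x ↦ X`, `y ↦ Y`
(written with values in `Π`, as `a ↦ e_0 (lift a) e_0`). -/
noncomputable def piMap (n : ℂ) (a : FreeAlgebra ℂ WGen) : PiAlg 1 (-n) :=
  Pe0 1 (-n) * wLift n a * Pe0 1 (-n)

namespace Aux

section Generic

variable {A : Type*} [Ring A]

lemma la {a b m : A} (h : a * m * b = m) (ha : a * a = a) : a * m = m := by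
  calc a * m = a * (a * m * b) := by rw [h]
    _ = a * m * b := by rw [← mul_assoc, ← mul_assoc, ha]
    _ = m := h

lemma ra {a b m : A} (h : a * m * b = m) (hb : b * b = b) : m * b = m := by
  calc m * b = a * m * b * b := by rw [h]
    _ = a * m * b := by rw [mul_assoc, hb]
    _ = m := h

lemma zl {a b c m : A} (h : a * m * b = m) (hc : c * a = 0) : c * m = 0 := by
  calc c * m = c * (a * m * b) := by rw [h]
    _ = c * a * m * b := by rw [← mul_assoc, ← mul_assoc]
    _ = 0 := by rw [hc, zero_mul, zero_mul]

lemma zr {a b c m : A} (h : a * m * b = m) (hc : b * c = 0) : m * c = 0 := by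
  calc m * c = a * m * b * c := by rw [h]
    _ = a * m * (b * c) := by rw [mul_assoc]
    _ = 0 := by rw [hc, mul_zero]

end Generic

section Rels

variable (l0 li : ℂ)

lemma hEE : Pe0 l0 li * Pe0 l0 li = Pe0 l0 li := by
  simpa only [map_mul, Pe0, Peinf, PX, PY, Pv, Pw] using RingQuot.mkAlgHom_rel ℂ (PiRel.idem_e0 (lam0 := l0) (laminf := li))

lemma hII : Peinf l0 li * Peinf l0 li = Peinf l0 li := by
  simpa only [map_mul, Pe0, Peinf, PX, PY, Pv, Pw] using RingQuot.mkAlgHom_rel ℂ (PiRel.idem_einf (lam0 := l0) (laminf := li))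

lemma hEI : Pe0 l0 li * Peinf l0 li = 0 := by
  simpa only [map_mul, map_zero, Pe0, Peinf, PX, PY, Pv, Pw] using
    RingQuot.mkAlgHom_rel ℂ (PiRel.orth₁ (lam0 := l0) (laminf := li))

lemma hIE : Peinf l0 li * Pe0 l0 li = 0 := by
  simpa only [map_mul, map_zero, Pe0, Peinf, PX, PY, Pv, Pw] using
    RingQuot.mkAlgHom_rel ℂ (PiRel.orth₂ (lam0 := l0) (laminf := li))

lemma hsum : Pe0 l0 li + Peinf l0 li = 1 := by
  simpa only [map_add, map_one, Pe0, Peinf, PX, PY, Pv, Pw] using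
    RingQuot.mkAlgHom_rel ℂ (PiRel.sum_one (lam0 := l0) (laminf := li))

lemma hX : Pe0 l0 li * PX l0 li * Pe0 l0 li = PX l0 li := by
  simpa only [map_mul, Pe0, Peinf, PX, PY, Pv, Pw] using RingQuot.mkAlgHom_rel ℂ (PiRel.X_path (lam0 := l0) (laminf := li))

lemma hY : Pe0 l0 li * PY l0 li * Pe0 l0 li = PY l0 li := by
  simpa only [map_mul, Pe0, Peinf, PX, PY, Pv, Pw] using RingQuot.mkAlgHom_rel ℂ (PiRel.Y_path (lam0 := l0) (laminf := li))

lemma hv : Peinf l0 li * Pv l0 li * Pe0 l0 li = Pv l0 li := by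
  simpa only [map_mul, Pe0, Peinf, PX, PY, Pv, Pw] using RingQuot.mkAlgHom_rel ℂ (PiRel.v_path (lam0 := l0) (laminf := li))

lemma hw : Pe0 l0 li * Pw l0 li * Peinf l0 li = Pw l0 li := by
  simpa only [map_mul, Pe0, Peinf, PX, PY, Pv, Pw] using RingQuot.mkAlgHom_rel ℂ (PiRel.w_path (lam0 := l0) (laminf := li))

lemma hmain : PX l0 li * PY l0 li - PY l0 li * PX l0 li - Pw l0 li * Pv l0 li
    = l0 • Pe0 l0 li := by
  simpa only [map_mul, map_sub, map_smul, Pe0, Peinf, PX, PY, Pv, Pw] using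
    RingQuot.mkAlgHom_rel ℂ (PiRel.main (lam0 := l0) (laminf := li))

lemma hvw : Pv l0 li * Pw l0 li = li • Peinf l0 li := by
  simpa only [map_mul, map_smul, Pe0, Peinf, PX, PY, Pv, Pw] using
    RingQuot.mkAlgHom_rel ℂ (PiRel.vw (lam0 := l0) (laminf := li))

-- absorption lemmas
lemma EX : Pe0 l0 li * PX l0 li = PX l0 li := la (hX l0 li) (hEE l0 li)
lemma XE : PX l0 li * Pe0 l0 li = PX l0 li := ra (hX l0 li) (hEE l0 li)
lemma IX : Peinf l0 li * PX l0 li = 0 := zl (hX l0 li) (hIE l0 li)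
lemma XI : PX l0 li * Peinf l0 li = 0 := zr (hX l0 li) (hEI l0 li)
lemma EY : Pe0 l0 li * PY l0 li = PY l0 li := la (hY l0 li) (hEE l0 li)
lemma YE : PY l0 li * Pe0 l0 li = PY l0 li := ra (hY l0 li) (hEE l0 li)
lemma IY : Peinf l0 li * PY l0 li = 0 := zl (hY l0 li) (hIE l0 li)
lemma YI : PY l0 li * Peinf l0 li = 0 := zr (hY l0 li) (hEI l0 li)
lemma Iv : Peinf l0 li * Pv l0 li = Pv l0 li := la (hv l0 li) (hII l0 li)
lemma vE : Pv l0 li * Pe0 l0 li = Pv l0 li := ra (hv l0 li) (hEE l0 li)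
lemma Ev : Pe0 l0 li * Pv l0 li = 0 := zl (hv l0 li) (hEI l0 li)
lemma vI : Pv l0 li * Peinf l0 li = 0 := zr (hv l0 li) (hEI l0 li)
lemma Ew : Pe0 l0 li * Pw l0 li = Pw l0 li := la (hw l0 li) (hEE l0 li)
lemma wI : Pw l0 li * Peinf l0 li = Pw l0 li := ra (hw l0 li) (hII l0 li)
lemma Iw : Peinf l0 li * Pw l0 li = 0 := zl (hw l0 li) (hIE l0 li)
lemma wE : Pw l0 li * Pe0 l0 li = 0 := zr (hw l0 li) (hIE l0 li)

end Rels

/-- The commutator word `[x,y] - 1`, mapping to `wv` in `Π`. -/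
noncomputable def qq : FreeAlgebra ℂ WGen := wx * wy - wy * wx - 1

section Main

variable (n : ℂ)

local notation "E" => Pe0 1 (-n)
local notation "I" => Peinf 1 (-n)
local notation "QX" => PX 1 (-n)
local notation "QY" => PY 1 (-n)
local notation "Qv" => Pv 1 (-n)
local notation "Qw" => Pw 1 (-n)

lemma wLift_x : wLift n wx = QX := by
  simp [wLift, wx]

lemma wLift_y : wLift n wy = QY := by
  simp [wLift, wy]

lemma comm (a : FreeAlgebra ℂ WGen) : E * wLift n a = wLift n a * E := by
  induction a using FreeAlgebra.induction with
  | grade0 r =>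
      rw [AlgHom.commutes]
      exact (Algebra.commutes r _).symm
  | grade1 g =>
      cases g with
      | x => rw [show FreeAlgebra.ι ℂ WGen.x = wx from rfl, wLift_x, EX, XE]
      | y => rw [show FreeAlgebra.ι ℂ WGen.y = wy from rfl, wLift_y, EY, YE]
  | mul a b ha hb =>
      rw [map_mul, ← mul_assoc, ha, mul_assoc, hb, ← mul_assoc]
  | add a b ha hb =>
      rw [map_add, mul_add, add_mul, ha, hb]

lemma piMap_eq (a : FreeAlgebra ℂ WGen) : piMap n a = wLift n a * E := by
  unfold piMap
  rw [comm, mul_assoc, hEE]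

lemma piMap_eq' (a : FreeAlgebra ℂ WGen) : piMap n a = E * wLift n a := by
  rw [piMap_eq, ← comm]

lemma piMap_mul (a b : FreeAlgebra ℂ WGen) : piMap n a * piMap n b = piMap n (a * b) := by
  calc piMap n a * piMap n b = (E * wLift n a) * (wLift n b * E) := by
        rw [piMap_eq', piMap_eq]
    _ = E * (wLift n a * wLift n b) * E := by noncomm_ring
    _ = piMap n (a * b) := by rw [← map_mul]; rfl

lemma piMap_mul' (a b : FreeAlgebra ℂ WGen) (z : PiAlg 1 (-n)) :
    piMap n a * (piMap n b * z) = piMap n (a * b) * z := by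
  rw [← mul_assoc, piMap_mul]

lemma piMap_add (a b : FreeAlgebra ℂ WGen) : piMap n (a + b) = piMap n a + piMap n b := by
  simp [piMap, map_add, mul_add, add_mul]

lemma piMap_sub (a b : FreeAlgebra ℂ WGen) : piMap n (a - b) = piMap n a - piMap n b := by
  simp [piMap, map_sub, mul_sub, sub_mul]

lemma piMap_smul (c : ℂ) (a : FreeAlgebra ℂ WGen) : piMap n (c • a) = c • piMap n a := by
  simp [piMap, map_smul, mul_smul_comm, smul_mul_assoc]

lemma piMap_one : piMap n 1 = E := by
  simp only [piMap, map_one, mul_one, hEE]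

lemma piMap_zero : piMap n 0 = 0 := by
  simp [piMap]

lemma piMap_qq : piMap n qq = Qw * Qv := by
  have hq : wLift n qq = QX * QY - QY * QX - 1 := by
    simp [qq, wx, wy, wLift, map_sub, map_mul, map_one]
  have hm : QX * QY - QY * QX = E + Qw * Qv := by
    have h := hmain 1 (-n)
    rw [one_smul] at h
    rw [sub_eq_iff_eq_add] at h
    rw [h, add_comm]
  show E * wLift n qq * E = Qw * Qv
  rw [hq, hm]
  have h1 : E * (E + Qw * Qv - 1) = Qw * Qv := by
    rw [mul_sub, mul_add, hEE, mul_one, ← mul_assoc, Ew, add_sub_cancel_left]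
  rw [h1, mul_assoc, vE]

lemma wv_eq : Qw * Qv = piMap n qq := (piMap_qq n).symm

lemma wv_eq' (z : PiAlg 1 (-n)) : Qw * (Qv * z) = piMap n qq * z := by
  rw [← mul_assoc, wv_eq]

lemma wI' (z : PiAlg 1 (-n)) : Qw * (Peinf 1 (-n) * z) = Qw * z := by
  rw [← mul_assoc, wI]

lemma Iv' (z : PiAlg 1 (-n)) : Peinf 1 (-n) * (Qv * z) = Qv * z := by
  rw [← mul_assoc, Iv]

lemma wv_e0 : (Qw * Qv) * E = Qw * Qv := by rw [mul_assoc, vE]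

lemma wv_wv : (Qw * Qv) * (Qw * Qv) = (-n) • (Qw * Qv) := by
  calc (Qw * Qv) * (Qw * Qv) = Qw * (Qv * Qw) * Qv := by noncomm_ring
    _ = Qw * ((-n) • Peinf 1 (-n)) * Qv := by rw [hvw]
    _ = (-n) • (Qw * Peinf 1 (-n) * Qv) := by
        rw [mul_smul_comm, smul_mul_assoc]
    _ = (-n) • (Qw * Qv) := by rw [wI]

/-- Part 2 : the kernel element. -/
lemma kernel_part :
    piMap n ((wx * wy - wy * wx - 1) * (wx * wy - wy * wx + (n - 1) • 1)) = 0 := by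
  have hB : wx * wy - wy * wx + (n - 1) • (1 : FreeAlgebra ℂ WGen)
      = qq + 1 + (n - 1) • 1 := by
    rw [qq, sub_add_cancel]
  rw [show (wx * wy - wy * wx - 1 : FreeAlgebra ℂ WGen) = qq from rfl, hB, ← piMap_mul]
  rw [piMap_add, piMap_add, piMap_smul, piMap_one, piMap_qq]
  rw [mul_add, mul_add, wv_wv, wv_e0, mul_smul_comm, wv_e0]
  module

/-- The corner decomposition lemma. -/
lemma split (p s F G : PiAlg 1 (-n)) :
    p * (F * G) * s = (p * F * E) * (E * G * s) + (p * F * I) * (I * G * s) := by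
  have h1 : (p * F * E) * (E * G * s) = p * F * (E * E) * G * s := by noncomm_ring
  have h2 : (p * F * I) * (I * G * s) = p * F * (I * I) * G * s := by noncomm_ring
  rw [h1, h2, hEE, hII]
  have h3 : p * F * E * G * s + p * F * I * G * s = p * F * (E + I) * G * s := by noncomm_ring
  rw [h3, hsum]
  noncomm_ring

/-- The four-corner invariant. -/
lemma corners (f : FreeAlgebra ℂ PiGen) :
    (∃ a, piMap n a = E * RingQuot.mkAlgHom ℂ (PiRel 1 (-n)) f * E) ∧
    (∃ a, piMap n a * Qw = E * RingQuot.mkAlgHom ℂ (PiRel 1 (-n)) f * I) ∧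
    (∃ a, Qv * piMap n a = I * RingQuot.mkAlgHom ℂ (PiRel 1 (-n)) f * E) ∧
    (∃ (c : ℂ) (a : FreeAlgebra ℂ WGen),
      c • I + Qv * piMap n a * Qw = I * RingQuot.mkAlgHom ℂ (PiRel 1 (-n)) f * I) := by
  induction f using FreeAlgebra.induction with
  | grade0 r =>
      refine ⟨⟨algebraMap ℂ _ r, ?_⟩, ⟨0, ?_⟩, ⟨0, ?_⟩, ⟨r, 0, ?_⟩⟩
      · simp [piMap, AlgHom.commutes, Algebra.algebraMap_eq_smul_one, mul_smul_comm,
          smul_mul_assoc]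
      · simp [piMap, AlgHom.commutes, Algebra.algebraMap_eq_smul_one, mul_smul_comm,
          smul_mul_assoc, hEI]
      · simp [piMap, AlgHom.commutes, Algebra.algebraMap_eq_smul_one, mul_smul_comm,
          smul_mul_assoc, hIE]
      · simp [piMap, AlgHom.commutes, Algebra.algebraMap_eq_smul_one, mul_smul_comm,
          smul_mul_assoc, hII]
  | grade1 g =>
      cases g with
      | X =>
          refine ⟨⟨wx, ?_⟩, ⟨0, ?_⟩, ⟨0, ?_⟩, ⟨0, 0, ?_⟩⟩
          · show E * wLift n wx * E = E * QX * E
            rw [wLift_x]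
          · show piMap n 0 * Qw = E * QX * I
            rw [piMap_zero, zero_mul, EX, XI]
          · show Qv * piMap n 0 = I * QX * E
            rw [piMap_zero, mul_zero, IX, zero_mul]
          · show (0 : ℂ) • I + Qv * piMap n 0 * Qw = I * QX * I
            rw [piMap_zero, zero_smul, mul_zero, zero_mul, IX, zero_mul, zero_add]
      | Y =>
          refine ⟨⟨wy, ?_⟩, ⟨0, ?_⟩, ⟨0, ?_⟩, ⟨0, 0, ?_⟩⟩
          · show E * wLift n wy * E = E * QY * E
            rw [wLift_y]
          · show piMap n 0 * Qw = E * QY * I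
            rw [piMap_zero, zero_mul, EY, YI]
          · show Qv * piMap n 0 = I * QY * E
            rw [piMap_zero, mul_zero, IY, zero_mul]
          · show (0 : ℂ) • I + Qv * piMap n 0 * Qw = I * QY * I
            rw [piMap_zero, zero_smul, mul_zero, zero_mul, IY, zero_mul, zero_add]
      | v =>
          refine ⟨⟨0, ?_⟩, ⟨0, ?_⟩, ⟨1, ?_⟩, ⟨0, 0, ?_⟩⟩
          · show piMap n 0 = E * Qv * E
            rw [piMap_zero, Ev, zero_mul]
          · show piMap n 0 * Qw = E * Qv * I
            rw [piMap_zero, zero_mul, Ev, zero_mul]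
          · show Qv * piMap n 1 = I * Qv * E
            rw [piMap_one, vE, hv]
          · show (0 : ℂ) • I + Qv * piMap n 0 * Qw = I * Qv * I
            rw [piMap_zero, zero_smul, mul_zero, zero_mul, zero_add, Iv, vI]
      | w =>
          refine ⟨⟨0, ?_⟩, ⟨1, ?_⟩, ⟨0, ?_⟩, ⟨0, 0, ?_⟩⟩
          · show piMap n 0 = E * Qw * E
            rw [piMap_zero, Ew, wE]
          · show piMap n 1 * Qw = E * Qw * I
            rw [piMap_one, Ew, wI]
          · show Qv * piMap n 0 = I * Qw * E
            rw [piMap_zero, mul_zero, Iw, zero_mul]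
          · show (0 : ℂ) • I + Qv * piMap n 0 * Qw = I * Qw * I
            rw [piMap_zero, zero_smul, mul_zero, zero_mul, zero_add, Iw, zero_mul]
      | e0 =>
          refine ⟨⟨1, ?_⟩, ⟨0, ?_⟩, ⟨0, ?_⟩, ⟨0, 0, ?_⟩⟩
          · show piMap n 1 = E * E * E
            rw [piMap_one, hEE, hEE]
          · show piMap n 0 * Qw = E * E * I
            rw [piMap_zero, zero_mul, hEE, hEI]
          · show Qv * piMap n 0 = I * E * E
            rw [piMap_zero, mul_zero, hIE, zero_mul]
          · show (0 : ℂ) • I + Qv * piMap n 0 * Qw = I * E * I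
            rw [piMap_zero, zero_smul, mul_zero, zero_mul, zero_add, hIE, zero_mul]
      | einf =>
          refine ⟨⟨0, ?_⟩, ⟨0, ?_⟩, ⟨0, ?_⟩, ⟨1, 0, ?_⟩⟩
          · show piMap n 0 = E * I * E
            rw [piMap_zero, hEI, zero_mul]
          · show piMap n 0 * Qw = E * I * I
            rw [piMap_zero, zero_mul, hEI, zero_mul]
          · show Qv * piMap n 0 = I * I * E
            rw [piMap_zero, mul_zero, hII, hIE]
          · show (1 : ℂ) • I + Qv * piMap n 0 * Qw = I * I * I
            rw [piMap_zero, mul_zero, zero_mul, add_zero, one_smul, hII, hII]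
  | mul f g hf hg =>
      obtain ⟨⟨a, ha⟩, ⟨b, hb⟩, ⟨c, hc⟩, ⟨k1, d1, hd1⟩⟩ := hf
      obtain ⟨⟨a', ha'⟩, ⟨b', hb'⟩, ⟨c', hc'⟩, ⟨k2, d2, hd2⟩⟩ := hg
      refine ⟨⟨a * a' + b * qq * c', ?_⟩,
        ⟨a * b' + (k2 • b + b * qq * d2), ?_⟩,
        ⟨c * a' + (k1 • c' + d1 * qq * c'), ?_⟩,
        ⟨k1 * k2, c * b' + (k1 • d2 + k2 • d1 + d1 * qq * d2), ?_⟩⟩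
      · rw [map_mul, split, ← ha, ← ha', ← hb, ← hc']
        simp only [piMap_add, piMap_smul, piMap_mul, piMap_mul', wv_eq, wv_eq', wI, wI', Iv, Iv', hII,
          mul_assoc, mul_add, add_mul, smul_mul_assoc, mul_smul_comm, smul_smul, smul_add]
      · rw [map_mul, split, ← ha, ← hb', ← hb, ← hd2]
        simp only [piMap_add, piMap_smul, piMap_mul, piMap_mul', wv_eq, wv_eq', wI, wI', Iv, Iv', hII,
          mul_assoc, mul_add, add_mul, smul_mul_assoc, mul_smul_comm, smul_smul, smul_add]
      · rw [map_mul, split, ← hc, ← ha', ← hd1, ← hc']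
        simp only [piMap_add, piMap_smul, piMap_mul, piMap_mul', wv_eq, wv_eq', wI, wI', Iv, Iv', hII,
          mul_assoc, mul_add, add_mul, smul_mul_assoc, mul_smul_comm, smul_smul, smul_add]
      · rw [map_mul, split, ← hc, ← hb', ← hd1, ← hd2]
        simp only [piMap_add, piMap_smul, piMap_mul, piMap_mul', wv_eq, wv_eq', wI, wI', Iv, Iv', hII,
          mul_assoc, mul_add, add_mul, smul_mul_assoc, mul_smul_comm, smul_smul, smul_add]
        module
  | add f g hf hg =>
      obtain ⟨⟨a, ha⟩, ⟨b, hb⟩, ⟨c, hc⟩, ⟨k1, d1, hd1⟩⟩ := hf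
      obtain ⟨⟨a', ha'⟩, ⟨b', hb'⟩, ⟨c', hc'⟩, ⟨k2, d2, hd2⟩⟩ := hg
      refine ⟨⟨a + a', ?_⟩, ⟨b + b', ?_⟩, ⟨c + c', ?_⟩, ⟨k1 + k2, d1 + d2, ?_⟩⟩
      · rw [map_add, mul_add, add_mul, ← ha, ← ha', piMap_add]
      · rw [map_add, mul_add, add_mul, ← hb, ← hb', piMap_add, add_mul]
      · rw [map_add, mul_add, add_mul, ← hc, ← hc', piMap_add, mul_add]
      · rw [map_add, mul_add, add_mul, ← hd1, ← hd2, piMap_add, add_smul]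
        rw [mul_add, add_mul]
        module

end Main
end Aux

/-- `π` is surjective onto the corner algebra `e_0 Π e_0`, and its kernel contains
`([x,y] - 1)([x,y] + n - 1)`. -/
theorem stmt10 (n : ℂ) (hn : n ≠ 0) :
    (∀ z : PiAlg 1 (-n), Pe0 1 (-n) * z * Pe0 1 (-n) = z → ∃ a, piMap n a = z) ∧
    piMap n ((wx * wy - wy * wx - 1) * (wx * wy - wy * wx + (n - 1) • 1)) = 0 := by
  constructor
  · intro z hz
    obtain ⟨f, rfl⟩ := RingQuot.mkAlgHom_surjective ℂ (PiRel 1 (-n)) z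
    obtain ⟨a, ha⟩ := (Aux.corners n f).1
    exact ⟨a, ha.trans hz⟩
  · exact Aux.kernel_part n
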